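/- arXiv:2210.05213 — 4 statements merged into one kernel-verified Lean document; each statement's English description precedes it below -/
import Mathlib

section
/- Let σ̄ ≥ σ̲ > 0 and G(a) = ½(σ̄² a⁺ − σ̲² a⁻). Suppose F: ℝ → ℝ is differentiable at x₀ with F(x₀) = 0 and F'(x₀) > 0, and suppose W: ℝ → ℝ is differentiable at x₀ with W(x₀) + G(F(x₀)) = 0 and W(x) + G(F(x)) ≥ 0 for all x in a neighborhood of x₀. Then W'(x₀) + ½ σ̄² F'(x₀) ≥ 0 and W'(x₀) + ½ σ̲² F'(x₀) ≤ 0; consequently there exists v ∈ [σ̲², σ̄²] with W'(x₀) = −½ v F'(x₀). -/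
open Set Filter

lemma slope_nonneg_limit {H : ℝ → ℝ} {x₀ d : ℝ}
    (hd : HasDerivWithinAt H d (Ioi x₀) x₀) (h0 : H x₀ = 0)
    (hpos : ∀ᶠ x in nhds x₀, 0 ≤ H x) : 0 ≤ d := by
  rw [hasDerivWithinAt_iff_tendsto_slope, Set.diff_singleton_eq_self notMem_Ioi_self] at hd
  refine ge_of_tendsto hd ?_
  filter_upwards [nhdsWithin_le_nhds hpos, self_mem_nhdsWithin] with x hx (hx' : x ∈ Ioi x₀)
  rw [slope_def_field, h0, sub_zero]
  exact div_nonneg hx (by linarith [hx'.out])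

lemma slope_nonpos_limit {H : ℝ → ℝ} {x₀ d : ℝ}
    (hd : HasDerivWithinAt H d (Iio x₀) x₀) (h0 : H x₀ = 0)
    (hpos : ∀ᶠ x in nhds x₀, 0 ≤ H x) : d ≤ 0 := by
  rw [hasDerivWithinAt_iff_tendsto_slope, Set.diff_singleton_eq_self notMem_Iio_self] at hd
  refine le_of_tendsto hd ?_
  filter_upwards [nhdsWithin_le_nhds hpos, self_mem_nhdsWithin] with x hx (hx' : x ∈ Iio x₀)
  rw [slope_def_field, h0, sub_zero]
  exact div_nonpos_of_nonneg_of_nonpos hx (by linarith [hx'.out])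

theorem deriv_sandwich (σb σu : ℝ) (hσu : 0 < σu) (hσ : σu ≤ σb)
    (G : ℝ → ℝ)
    (hG : ∀ a : ℝ, G a = (σb ^ 2 * max a 0 - σu ^ 2 * max (-a) 0) / 2)
    (F W : ℝ → ℝ) (x₀ f' w' : ℝ)
    (hF : HasDerivAt F f' x₀) (hF0 : F x₀ = 0) (hf' : 0 < f')
    (hW : HasDerivAt W w' x₀) (hW0 : W x₀ + G (F x₀) = 0)
    (hpos : ∀ᶠ x in nhds x₀, 0 ≤ W x + G (F x)) :
    0 ≤ w' + (1 / 2) * σb ^ 2 * f' ∧ w' + (1 / 2) * σu ^ 2 * f' ≤ 0 ∧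
      ∃ v ∈ Icc (σu ^ 2) (σb ^ 2), w' = -(1 / 2) * v * f' := by
  have hG0 : G 0 = 0 := by simp [hG]
  have hH0 : W x₀ + G (F x₀) = 0 := hW0
  -- F is eventually positive on the right, negative on the left
  have hslope : Filter.Tendsto (slope F x₀) (nhdsWithin x₀ {x₀}ᶜ) (nhds f') :=
    hasDerivAt_iff_tendsto_slope.mp hF
  have hFpos : ∀ᶠ x in nhdsWithin x₀ (Ioi x₀), 0 < F x := by
    have h1 : Filter.Tendsto (slope F x₀) (nhdsWithin x₀ (Ioi x₀)) (nhds f') :=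
      hslope.mono_left (nhdsWithin_mono _ (fun x hx => ne_of_gt hx.out))
    filter_upwards [h1.eventually (eventually_gt_nhds hf'), self_mem_nhdsWithin]
      with x hx (hx' : x ∈ Ioi x₀)
    rw [slope_def_field, hF0, sub_zero] at hx
    have := mul_pos hx (sub_pos.mpr hx'.out)
    rwa [div_mul_cancel₀ _ (by linarith [hx'.out] : x - x₀ ≠ 0)] at this
  have hFneg : ∀ᶠ x in nhdsWithin x₀ (Iio x₀), F x < 0 := by
    have h1 : Filter.Tendsto (slope F x₀) (nhdsWithin x₀ (Iio x₀)) (nhds f') :=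
      hslope.mono_left (nhdsWithin_mono _ (fun x hx => ne_of_lt hx.out))
    filter_upwards [h1.eventually (eventually_gt_nhds hf'), self_mem_nhdsWithin]
      with x hx (hx' : x ∈ Iio x₀)
    rw [slope_def_field, hF0, sub_zero] at hx
    have hne : x - x₀ ≠ 0 := by linarith [hx'.out]
    have h2 : F x / (x - x₀) * (x - x₀) < 0 :=
      mul_neg_of_pos_of_neg hx (by linarith [hx'.out])
    rwa [div_mul_cancel₀ _ hne] at h2
  -- right derivative
  have hright : HasDerivWithinAt (fun x => W x + G (F x)) (w' + σb ^ 2 / 2 * f') (Ioi x₀) x₀ := by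
    have hbase : HasDerivWithinAt (fun x => W x + σb ^ 2 / 2 * F x)
        (w' + σb ^ 2 / 2 * f') (Ioi x₀) x₀ :=
      (hW.add ((hF.const_mul (σb ^ 2 / 2)))).hasDerivWithinAt
    refine hbase.congr_of_eventuallyEq ?_ (by simp [hG0, hF0])
    filter_upwards [hFpos] with x hx
    rw [hG (F x), max_eq_left hx.le, max_eq_right (by linarith : -F x ≤ 0)]
    ring
  have hleft : HasDerivWithinAt (fun x => W x + G (F x)) (w' + σu ^ 2 / 2 * f') (Iio x₀) x₀ := by
    have hbase : HasDerivWithinAt (fun x => W x + σu ^ 2 / 2 * F x)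
        (w' + σu ^ 2 / 2 * f') (Iio x₀) x₀ :=
      (hW.add ((hF.const_mul (σu ^ 2 / 2)))).hasDerivWithinAt
    refine hbase.congr_of_eventuallyEq ?_ (by simp [hG0, hF0])
    filter_upwards [hFneg] with x hx
    rw [hG (F x), max_eq_right hx.le, max_eq_left (by linarith : 0 ≤ -F x)]
    ring
  have h1 : 0 ≤ w' + σb ^ 2 / 2 * f' := slope_nonneg_limit hright hH0 hpos
  have h2 : w' + σu ^ 2 / 2 * f' ≤ 0 := slope_nonpos_limit hleft hH0 hpos
  refine ⟨by linarith, by linarith, -2 * w' / f', ⟨?_, ?_⟩, ?_⟩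
  · rw [le_div_iff₀ hf']; nlinarith
  · rw [div_le_iff₀ hf']; nlinarith
  · field_simp
end

section
/- For T > 0, let P solve P'(s) = −(5P² + 10P + 1)/(1+P) with P(T) = 1 on [0,T], with P(s) > 0. Define V(t,x) = ½ P(t) x². Then V satisfies the HJB equation ∂_t V(t,x) + inf_{v ∈ ℝ} G( (x+v)² ∂²_{xx}V(t,x) + 2(4x+v) ∂_x V(t,x) + x² + v² ) = 0 with V(T,x) = ½ x², where G(a) = ½(a⁺ − 0.2 a⁻); moreover the infimum over v is attained at v = −2P(t)x/(1+P(t)), and at this point the argument of G is nonnegative so G acts linearly with coefficient ½. -/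
open Set

theorem example2_HJB (T : ℝ) (hT : 0 < T)
    (G : ℝ → ℝ)
    (hG : ∀ a : ℝ, G a = (max a 0 - 0.2 * max (-a) 0) / 2)
    (P P' : ℝ → ℝ)
    (hderiv : ∀ s ∈ Icc (0 : ℝ) T, HasDerivAt P (P' s) s)
    (hric : ∀ s ∈ Icc (0 : ℝ) T,
      P' s = -(5 * (P s) ^ 2 + 10 * P s + 1) / (1 + P s))
    (hPT : P T = 1) (hpos : ∀ s ∈ Icc (0 : ℝ) T, 0 < P s)
    (V : ℝ → ℝ → ℝ) (hV : ∀ t x, V t x = (1 / 2) * P t * x ^ 2)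
    (t x : ℝ) (ht : t ∈ Icc (0 : ℝ) T) :
    (HasDerivAt (fun s => V s x) ((1 / 2) * P' t * x ^ 2) t) ∧
    ((1 / 2) * P' t * x ^ 2 +
        sInf (Set.range (fun v : ℝ =>
          G ((x + v) ^ 2 * P t + 2 * (4 * x + v) * (P t * x) + x ^ 2 + v ^ 2))) = 0) ∧
    (V T x = (1 / 2) * x ^ 2) ∧
    (∀ v : ℝ,
      G ((x + (-2 * P t * x / (1 + P t))) ^ 2 * P t
          + 2 * (4 * x + (-2 * P t * x / (1 + P t))) * (P t * x) + x ^ 2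
          + (-2 * P t * x / (1 + P t)) ^ 2)
        ≤ G ((x + v) ^ 2 * P t + 2 * (4 * x + v) * (P t * x) + x ^ 2 + v ^ 2)) ∧
    (0 ≤ (x + (-2 * P t * x / (1 + P t))) ^ 2 * P t
        + 2 * (4 * x + (-2 * P t * x / (1 + P t))) * (P t * x) + x ^ 2
        + (-2 * P t * x / (1 + P t)) ^ 2) ∧
    (G ((x + (-2 * P t * x / (1 + P t))) ^ 2 * P t
          + 2 * (4 * x + (-2 * P t * x / (1 + P t))) * (P t * x) + x ^ 2
          + (-2 * P t * x / (1 + P t)) ^ 2)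
      = (1 / 2) * ((x + (-2 * P t * x / (1 + P t))) ^ 2 * P t
          + 2 * (4 * x + (-2 * P t * x / (1 + P t))) * (P t * x) + x ^ 2
          + (-2 * P t * x / (1 + P t)) ^ 2)) := by
  have hp : 0 < P t := hpos t ht
  have hp1 : (0:ℝ) < 1 + P t := by linarith
  set p := P t with hpdef
  set vs : ℝ := -2 * p * x / (1 + p) with hvs
  set f : ℝ → ℝ := fun v =>
    (x + v) ^ 2 * p + 2 * (4 * x + v) * (p * x) + x ^ 2 + v ^ 2 with hf
  -- value at the minimizer
  have hfvs : f vs = x ^ 2 * (5 * p ^ 2 + 10 * p + 1) / (1 + p) := by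
    simp only [hf, hvs]
    field_simp
    ring
  have hfvs0 : 0 ≤ f vs := by
    rw [hfvs]
    positivity
  -- f vs ≤ f v for all v
  have hmin : ∀ v : ℝ, f vs ≤ f v := by
    intro v
    rw [hfvs, div_le_iff₀ hp1]
    simp only [hf]
    nlinarith [sq_nonneg ((1 + p) * v + 2 * p * x), sq_nonneg ((1+p)*v - 2*p*x)]
  -- monotonicity of G
  have hGmono : ∀ a b : ℝ, a ≤ b → G a ≤ G b := by
    intro a b hab
    rw [hG a, hG b]
    have h1 : max a 0 ≤ max b 0 := max_le_max hab le_rfl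
    have h2 : max (-b) 0 ≤ max (-a) 0 := max_le_max (by linarith) le_rfl
    have : (0.2:ℝ) * max (-b) 0 ≤ 0.2 * max (-a) 0 := by nlinarith
    linarith
  -- G at the minimizer is linear
  have hGlin : G (f vs) = (1/2) * f vs := by
    rw [hG]
    rw [max_eq_left hfvs0, max_eq_right (by linarith)]
    ring
  refine ⟨?_, ?_, ?_, fun v => hGmono _ _ (hmin v), hfvs0, hGlin⟩
  · have h := (hderiv t ht).const_mul (1/2 : ℝ) |>.mul_const (x ^ 2)
    have : (fun s => V s x) = fun s => 1/2 * P s * x ^ 2 := by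
      funext s; exact hV s x
    rw [this]
    convert h using 1
  · have hinf : sInf (Set.range (fun v : ℝ => G (f v))) = G (f vs) := by
      apply le_antisymm
      · exact csInf_le ⟨G (f vs), by rintro y ⟨v, rfl⟩; exact hGmono _ _ (hmin v)⟩
          ⟨vs, rfl⟩
      · exact le_csInf ⟨G (f vs), vs, rfl⟩ (by rintro y ⟨v, rfl⟩; exact hGmono _ _ (hmin v))
    show (1/2) * P' t * x ^ 2 + sInf (Set.range fun v => G (f v)) = 0
    rw [hinf, hGlin, hfvs, hric t ht, ← hpdef]
    field_simp
    ring
  · rw [hV, hPT]; ring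
end

section
/- Fix T > 1, v ∈ (1,2), and t = T−1. Define φ(s, x') = −(x' + (v/2)(T−s))² if x' > −(v/2)(T−s); φ(s,x') = 0 if −v(T−s) ≤ x' ≤ −(v/2)(T−s); and φ(s,x') = −(x' + v(T−s))² if x' < −v(T−s). Then φ is continuously differentiable in (s, x') on [t,T)×ℝ, and for every (s,x') with s ∈ [t,T): ∂_s φ(s,x') + G(2v ∂_{x'}φ(s,x')) = 0, where G(a) = ½(a⁺ − ½ a⁻). -/
open Set

lemma hasDerivAt_maxsq (u : ℝ) : HasDerivAt (fun y : ℝ => max y 0 ^ 2) (2 * max u 0) u := by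
  rcases lt_trichotomy u 0 with h | h | h
  · have hc : HasDerivAt (fun _ : ℝ => (0:ℝ)) 0 u := hasDerivAt_const u 0
    have heq : (fun y : ℝ => max y 0 ^ 2) =ᶠ[nhds u] fun _ => (0:ℝ) := by
      filter_upwards [Iio_mem_nhds h] with y hy
      simp [max_eq_right (le_of_lt hy.out)]
    have := hc.congr_of_eventuallyEq heq
    simpa [max_eq_right h.le] using this
  · subst h
    have h2 : HasDerivAt (fun y : ℝ => y ^ 2) 0 0 := by simpa using hasDerivAt_pow 2 (0:ℝ)
    rw [hasDerivAt_iff_isLittleO] at h2 ⊢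
    simp only [max_self, ne_eq, OfNat.ofNat_ne_zero, not_false_eq_true, zero_pow, sub_zero,
      mul_zero, smul_eq_mul, zero_mul] at h2 ⊢
    refine (Asymptotics.isBigO_of_le _ ?_).trans_isLittleO h2
    intro y
    rw [Real.norm_eq_abs, Real.norm_eq_abs, abs_pow, abs_pow]
    have h1 : |max y 0| ≤ |y| := by
      rcases le_or_gt y 0 with hy | hy
      · simp [max_eq_right hy]
      · simp [max_eq_left hy.le]
    exact pow_le_pow_left₀ (abs_nonneg _) h1 2
  · have hpw : HasDerivAt (fun y : ℝ => y ^ 2) (2 * u) u := by simpa using hasDerivAt_pow 2 u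
    have heq : (fun y : ℝ => max y 0 ^ 2) =ᶠ[nhds u] fun y => y ^ 2 := by
      filter_upwards [Ioi_mem_nhds h] with y hy
      simp [max_eq_left (le_of_lt hy.out)]
    have := hpw.congr_of_eventuallyEq heq
    simpa [max_eq_left h.le] using this

lemma hasDerivAt_minsq (u : ℝ) : HasDerivAt (fun y : ℝ => min y 0 ^ 2) (2 * min u 0) u := by
  have h := (hasDerivAt_maxsq (-u)).comp u (hasDerivAt_neg u)
  have heq : ∀ y : ℝ, max (-y) 0 ^ 2 = min y 0 ^ 2 := by
    intro y
    rcases le_total y 0 with hy | hy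
    · rw [min_eq_left hy, max_eq_left (neg_nonneg.mpr hy)]; ring
    · rw [min_eq_right hy, max_eq_right (neg_nonpos.mpr hy)]
  have h2 : HasDerivAt (fun y : ℝ => min y 0 ^ 2) (2 * max (-u) 0 * (-1)) u := by
    refine h.congr_of_eventuallyEq ?_
    filter_upwards with y
    exact (heq y).symm
  have h3 : 2 * max (-u) 0 * (-1) = 2 * min u 0 := by
    rcases le_total u 0 with hu | hu
    · rw [min_eq_left hu, max_eq_left (neg_nonneg.mpr hu)]; ring
    · rw [min_eq_right hu, max_eq_right (neg_nonpos.mpr hu)]; ring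
  rwa [h3] at h2

theorem example3_phi_solves_PDE (T v : ℝ) (hT : 1 < T) (hv : v ∈ Ioo (1 : ℝ) 2)
    (t : ℝ) (ht : t = T - 1)
    (G : ℝ → ℝ)
    (hG : ∀ a : ℝ, G a = (max a 0 - (1 / 2) * max (-a) 0) / 2)
    (φ : ℝ → ℝ → ℝ)
    (hφ : ∀ s x' : ℝ,
      φ s x' = if x' > -(v / 2) * (T - s) then -(x' + (v / 2) * (T - s)) ^ 2
        else if x' < -v * (T - s) then -(x' + v * (T - s)) ^ 2
        else 0) :
    ∃ φs φx : ℝ → ℝ → ℝ,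
      ContinuousOn (fun p : ℝ × ℝ => (φs p.1 p.2, φx p.1 p.2)) (Ico t T ×ˢ univ) ∧
      ∀ s ∈ Ico t T, ∀ x' : ℝ,
        HasDerivAt (fun r => φ r x') (φs s x') s ∧
        HasDerivAt (fun y => φ s y) (φx s x') x' ∧
        φs s x' + G (2 * v * φx s x') = 0 := by
  have hv0 : (0:ℝ) < v := lt_trans one_pos hv.1
  refine ⟨fun s x' => v * max (x' + v / 2 * (T - s)) 0 + 2 * v * min (x' + v * (T - s)) 0,
    fun s x' => -2 * max (x' + v / 2 * (T - s)) 0 - 2 * min (x' + v * (T - s)) 0, ?_, ?_⟩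
  · apply Continuous.continuousOn
    fun_prop
  · intro s hs x'
    have hsT : s < T := hs.2
    -- local closed form
    have key : ∀ r y : ℝ, r < T →
        φ r y = -(max (y + v / 2 * (T - r)) 0) ^ 2 - (min (y + v * (T - r)) 0) ^ 2 := by
      intro r y hr
      rw [hφ]
      have hTr : 0 < T - r := by linarith
      have hab : y + v / 2 * (T - r) < y + v * (T - r) := by nlinarith
      split_ifs with h1 h2
      · have ha : 0 < y + v / 2 * (T - r) := by nlinarith [h1]
        rw [max_eq_left ha.le, min_eq_right (by linarith : (0:ℝ) ≤ y + v * (T - r))]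
        ring_nf
      · have ha : y + v / 2 * (T - r) ≤ 0 := by nlinarith [not_lt.mp h1]
        rw [max_eq_right ha, min_eq_left (by nlinarith [h2] : y + v * (T - r) ≤ 0)]
        ring_nf
      · have ha : y + v / 2 * (T - r) ≤ 0 := by nlinarith [not_lt.mp h1]
        rw [max_eq_right ha, min_eq_right (by nlinarith [not_lt.mp h2] : (0:ℝ) ≤ y + v * (T - r))]
        ring
    set a := x' + v / 2 * (T - s) with hadef
    set b := x' + v * (T - s) with hbdef
    -- derivative in s
    have inner1 : HasDerivAt (fun r : ℝ => x' + v / 2 * (T - r)) (v / 2 * (-1)) s := by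
      exact ((((hasDerivAt_id s).const_sub T).const_mul (v / 2)).const_add x')
    have inner2 : HasDerivAt (fun r : ℝ => x' + v * (T - r)) (v * (-1)) s := by
      exact ((((hasDerivAt_id s).const_sub T).const_mul v).const_add x')
    have H1 : HasDerivAt (fun r : ℝ => max (x' + v / 2 * (T - r)) 0 ^ 2)
        (2 * max a 0 * (v / 2 * (-1))) s := by have := (hasDerivAt_maxsq a).comp s inner1; exact this
    have H2 : HasDerivAt (fun r : ℝ => min (x' + v * (T - r)) 0 ^ 2)
        (2 * min b 0 * (v * (-1))) s := by have := (hasDerivAt_minsq b).comp s inner2; exact this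
    have HF : HasDerivAt
        (fun r : ℝ => -(max (x' + v / 2 * (T - r)) 0) ^ 2 - (min (x' + v * (T - r)) 0) ^ 2)
        (v * max a 0 + 2 * v * min b 0) s := by
      have hval : v * max a 0 + 2 * v * min b 0
          = -(2 * max a 0 * (v / 2 * (-1))) - 2 * min b 0 * (v * (-1)) := by ring
      rw [hval]
      exact H1.neg.sub H2
    have hds : HasDerivAt (fun r => φ r x') (v * max a 0 + 2 * v * min b 0) s := by
      refine HF.congr_of_eventuallyEq ?_
      filter_upwards [Iio_mem_nhds hsT] with r hr
      exact key r x' hr.out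
    -- derivative in x
    have innerx1 : HasDerivAt (fun y : ℝ => y + v / 2 * (T - s)) 1 x' :=
      (hasDerivAt_id x').add_const _
    have innerx2 : HasDerivAt (fun y : ℝ => y + v * (T - s)) 1 x' :=
      (hasDerivAt_id x').add_const _
    have Hx1 : HasDerivAt (fun y : ℝ => max (y + v / 2 * (T - s)) 0 ^ 2)
        (2 * max a 0 * 1) x' := by have := (hasDerivAt_maxsq a).comp x' innerx1; exact this
    have Hx2 : HasDerivAt (fun y : ℝ => min (y + v * (T - s)) 0 ^ 2)
        (2 * min b 0 * 1) x' := by have := (hasDerivAt_minsq b).comp x' innerx2; exact this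
    have HFx : HasDerivAt
        (fun y : ℝ => -(max (y + v / 2 * (T - s)) 0) ^ 2 - (min (y + v * (T - s)) 0) ^ 2)
        (-2 * max a 0 - 2 * min b 0) x' := by
      have hval : -2 * max a 0 - 2 * min b 0
          = -(2 * max a 0 * 1) - 2 * min b 0 * 1 := by ring
      rw [hval]
      exact Hx1.neg.sub Hx2
    have hdx : HasDerivAt (fun y => φ s y) (-2 * max a 0 - 2 * min b 0) x' := by
      refine HFx.congr_of_eventuallyEq ?_
      filter_upwards with y
      exact key s y hsT
    refine ⟨hds, hdx, ?_⟩
    -- PDE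
    have hm : 0 ≤ max a 0 := le_max_right _ _
    have hn : min b 0 ≤ 0 := min_le_right _ _
    have hab : a < b := by
      rw [hadef, hbdef]; nlinarith [hsT]
    have hmn : max a 0 = 0 ∨ min b 0 = 0 := by
      rcases lt_or_ge 0 a with h | h
      · exact Or.inr (min_eq_right (by linarith : (0:ℝ) ≤ b))
      · exact Or.inl (max_eq_right h)
    have hgoal : ∀ m n : ℝ, 0 ≤ m → n ≤ 0 → (m = 0 ∨ n = 0) →
        (v * m + 2 * v * n) + G (2 * v * (-2 * m - 2 * n)) = 0 := by
      intro m n hm' hn' hmn'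
      rw [hG]
      rcases hmn' with h0 | h0 <;> subst h0
      · rw [max_eq_left (by nlinarith), max_eq_right (by nlinarith)]; ring
      · rw [max_eq_right (by nlinarith), max_eq_left (by nlinarith)]; ring
    exact hgoal (max a 0) (min b 0) hm hn hmn
end

section
/- Fix T > 1, t = T−1, v ∈ (1,2). Let γ: [t,T] → [0.5, 1] be measurable and suppose that for almost every s ∈ [t,T]: if v∫_t^s γ(θ)dθ − 1 > −(v/2)(T−s) then γ(s) = 0.5, and if v∫_t^s γ(θ)dθ − 1 < −v(T−s) then γ(s) = 1. Then −v(T−s) ≤ v∫_t^s γ(θ)dθ − 1 ≤ −(v/2)(T−s) for all s ∈ [t,T]; in particular v∫_t^T γ(θ)dθ = 1. -/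
open Set MeasureTheory

lemma barrier_le {g : ℝ → ℝ} {t T c d : ℝ} (htT : t ≤ T)
    (hint : IntervalIntegrable g volume t T)
    (hGt : c * t + d ≤ 0)
    (hae : ∀ᵐ s ∂(volume.restrict (Icc t T)),
       0 < (∫ θ in t..s, g θ) + c * s + d → g s + c = 0) :
    ∀ s ∈ Icc t T, (∫ θ in t..s, g θ) + c * s + d ≤ 0 := by
  set F : ℝ → ℝ := fun s => ∫ θ in t..s, g θ with hF
  set G : ℝ → ℝ := fun s => F s + c * s + d with hG
  have hIO : IntegrableOn g (uIcc t T) := (intervalIntegrable_iff').mp hint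
  have hFc : ContinuousOn F (Icc t T) := by
    have := intervalIntegral.continuousOn_primitive_interval (a := t) (b := T) (μ := volume)
      (f := g) hIO
    rwa [uIcc_of_le htT] at this
  have hGc : ContinuousOn G (Icc t T) :=
    (hFc.add (continuousOn_const.mul continuousOn_id)).add continuousOn_const
  intro s₀ hs₀
  by_contra hcon
  push_neg at hcon
  have hts₀ : t ≤ s₀ := hs₀.1
  set S : Set ℝ := Icc t s₀ ∩ G ⁻¹' Iic 0 with hS
  have htS : t ∈ S := by
    constructor
    · exact ⟨le_refl t, hts₀⟩
    · simp only [mem_preimage, mem_Iic, hG, hF]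
      rw [intervalIntegral.integral_same]
      linarith
  have hSclosed : IsClosed S := by
    apply ContinuousOn.preimage_isClosed_of_isClosed
      (hGc.mono (Icc_subset_Icc_right hs₀.2)) isClosed_Icc isClosed_Iic
  have hScomp : IsCompact S :=
    isCompact_Icc.of_isClosed_subset hSclosed inter_subset_left
  set s₁ : ℝ := sSup S with hs₁
  have hs₁S : s₁ ∈ S := hScomp.sSup_mem ⟨t, htS⟩
  obtain ⟨hs₁mem, hGs₁⟩ := hs₁S
  have hGs₁' : G s₁ ≤ 0 := hGs₁
  have hs₁lt : s₁ < s₀ := by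
    rcases lt_or_eq_of_le hs₁mem.2 with h | h
    · exact h
    · exfalso; rw [h] at hGs₁'; simp only [hG, hF] at hGs₁'; linarith
  have hgt : ∀ s ∈ Ioc s₁ s₀, 0 < G s := by
    intro s hs
    by_contra hcs
    push_neg at hcs
    have hsS : s ∈ S := ⟨⟨hs₁mem.1.trans hs.1.le, hs.2⟩, hcs⟩
    have : s ≤ s₁ := le_csSup hScomp.bddAbove hsS
    exact absurd this (not_le.mpr hs.1)
  -- integrability on subintervals
  have hsub : ∀ a b : ℝ, a ∈ Icc t T → b ∈ Icc t T → IntervalIntegrable g volume a b := by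
    intro a b ha hb
    apply hint.mono_set
    rw [uIcc_of_le htT]
    exact uIcc_subset_Icc ha hb
  have hs₁T : s₁ ∈ Icc t T := ⟨hs₁mem.1, hs₁mem.2.trans hs₀.2⟩
  have hint₁ : IntervalIntegrable g volume s₁ s₀ := hsub _ _ hs₁T hs₀
  have hint₂ : IntervalIntegrable g volume t s₁ := hsub _ _ ⟨le_refl t, htT⟩ hs₁T
  -- key: integral of g + c over (s₁, s₀] is 0
  have key : (∫ θ in s₁..s₀, (g θ + c)) = 0 := by
    have hae' : ∀ᵐ s, s ∈ Icc t T → (0 < (∫ θ in t..s, g θ) + c * s + d → g s + c = 0) :=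
      (ae_restrict_iff' measurableSet_Icc).mp hae
    have : (∫ θ in s₁..s₀, (g θ + c)) = ∫ θ in s₁..s₀, (0:ℝ) := by
      apply intervalIntegral.integral_congr_ae
      filter_upwards [hae'] with s hs hsmem
      rw [uIoc_of_le hs₁lt.le] at hsmem
      have hsIcc : s ∈ Icc t T := ⟨hs₁mem.1.trans hsmem.1.le, hsmem.2.trans hs₀.2⟩
      exact hs hsIcc (hgt s hsmem)
    rw [this, intervalIntegral.integral_zero]
  have hsplit : F s₁ + (∫ θ in s₁..s₀, g θ) = F s₀ :=
    intervalIntegral.integral_add_adjacent_intervals hint₂ hint₁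
  have hadd : (∫ θ in s₁..s₀, (g θ + c)) = (∫ θ in s₁..s₀, g θ) + c * (s₀ - s₁) := by
    rw [intervalIntegral.integral_add hint₁ (intervalIntegrable_const),
      intervalIntegral.integral_const, smul_eq_mul, mul_comm]
  have : G s₀ = G s₁ := by
    simp only [hG]
    have h1 : (∫ θ in s₁..s₀, g θ) = -(c * (s₀ - s₁)) := by linarith [key, hadd]
    have h2 : F s₀ = F s₁ - c * (s₀ - s₁) := by linarith [hsplit]
    rw [h2]; ring
  have : G s₀ ≤ 0 := this ▸ hGs₁'
  exact absurd hcon (not_lt.mpr this)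

theorem example3_gamma_constraint (T v : ℝ) (hT : 1 < T) (hv : v ∈ Ioo (1 : ℝ) 2)
    (t : ℝ) (ht : t = T - 1)
    (γ : ℝ → ℝ) (hmeas : Measurable γ)
    (hrange : ∀ s ∈ Icc t T, γ s ∈ Icc (0.5 : ℝ) 1)
    (hae : ∀ᵐ s ∂(volume.restrict (Icc t T)),
      ((v * ∫ θ in t..s, γ θ) - 1 > -(v / 2) * (T - s) → γ s = 0.5) ∧
      ((v * ∫ θ in t..s, γ θ) - 1 < -v * (T - s) → γ s = 1)) :
    (∀ s ∈ Icc t T,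
      -v * (T - s) ≤ (v * ∫ θ in t..s, γ θ) - 1 ∧
      (v * ∫ θ in t..s, γ θ) - 1 ≤ -(v / 2) * (T - s)) ∧
    (v * ∫ θ in t..T, γ θ) = 1 := by
  obtain ⟨hv1, hv2⟩ := hv
  have htT : t ≤ T := by rw [ht]; linarith
  -- integrability of γ on [t, T]
  have hIOn : IntegrableOn γ (Icc t T) := by
    have hconst : IntegrableOn (fun _ : ℝ => (1:ℝ)) (Icc t T) :=
      (integrableOn_const_iff).mpr (Or.inr measure_Icc_lt_top)
    apply Integrable.mono' hconst hmeas.aestronglyMeasurable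
    apply (ae_restrict_iff' measurableSet_Icc).mpr
    filter_upwards with s hs
    have h := hrange s hs
    rw [Real.norm_eq_abs, abs_le]
    constructor <;> [linarith [h.1]; exact h.2]
  have hint : IntervalIntegrable γ volume t T := by
    rw [intervalIntegrable_iff', uIcc_of_le htT]; exact hIOn
  -- upper barrier: apply barrier_le to g = v * γ, c = -(v/2), d = v*T/2 - 1
  have hub : ∀ s ∈ Icc t T, (v * ∫ θ in t..s, γ θ) - 1 ≤ -(v / 2) * (T - s) := by
    have H := barrier_le (g := fun θ => v * γ θ) (c := -(v/2)) (d := v*T/2 - 1) htT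
      (hint.const_mul v) (by rw [ht]; ring_nf; linarith)
      (by
        filter_upwards [hae] with s hs hpos
        rw [intervalIntegral.integral_const_mul] at hpos
        have hγ : γ s = 0.5 := hs.1 (by linarith)
        rw [hγ]; ring)
    intro s hs
    have := H s hs
    rw [intervalIntegral.integral_const_mul] at this
    linarith
  -- lower barrier: apply barrier_le to g = -(v * γ), c = v, d = 1 - v*T
  have hlb : ∀ s ∈ Icc t T, -v * (T - s) ≤ (v * ∫ θ in t..s, γ θ) - 1 := by
    have H := barrier_le (g := fun θ => -(v * γ θ)) (c := v) (d := 1 - v*T) htT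
      ((hint.const_mul v).neg) (by rw [ht]; ring_nf; linarith)
      (by
        filter_upwards [hae] with s hs hpos
        rw [intervalIntegral.integral_neg, intervalIntegral.integral_const_mul] at hpos
        have hγ : γ s = 1 := hs.2 (by linarith)
        rw [hγ]; ring)
    intro s hs
    have := H s hs
    rw [intervalIntegral.integral_neg, intervalIntegral.integral_const_mul] at this
    linarith
  refine ⟨fun s hs => ⟨hlb s hs, hub s hs⟩, ?_⟩
  have h1 := hlb T ⟨htT, le_refl T⟩
  have h2 := hub T ⟨htT, le_refl T⟩
  have : T - T = 0 := by ring
  rw [this] at h1 h2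
  linarith
end
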